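/- Every n-dimensional evolution algebra over a field K whose annihilator has dimension n − 2 is isotopic to the evolution algebra E_2 with natural basis {e_1,…,e_n} and products e_1e_1 = e_2e_2 = e_1 and e_ie_j = 0 otherwise, or to the evolution algebra E_{5_{0,0}} with natural basis {e_1,…,e_n} and products e_1e_1 = e_1, e_2e_2 = e_2 and e_ie_j = 0 otherwise. -/

import Mathlib

open scoped BigOperators

noncomputable section

/-- The product in the `n`-dimensional evolution algebra over `K` (on the model space
`Fin n → K`, whose standard basis is the natural basis) with structure constants `t`,
so that `eᵢ * eᵢ = ∑ⱼ t i j • eⱼ` and `eᵢ * eⱼ = 0` for `i ≠ j`. -/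
def evolMul {K : Type*} [Field K] {n : ℕ} (t : Fin n → Fin n → K)
    (x y : Fin n → K) : Fin n → K :=
  fun k => ∑ i, x i * y i * t i k

lemma evolMul_add_left {K : Type*} [Field K] {n : ℕ} (t : Fin n → Fin n → K)
    (a b v : Fin n → K) : evolMul t (a + b) v = evolMul t a v + evolMul t b v := by
  funext k
  simp [evolMul, add_mul, Finset.sum_add_distrib]

lemma evolMul_add_right {K : Type*} [Field K] {n : ℕ} (t : Fin n → Fin n → K)
    (v a b : Fin n → K) : evolMul t v (a + b) = evolMul t v a + evolMul t v b := by
  funext k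
  simp [evolMul, mul_add, add_mul, Finset.sum_add_distrib]

lemma evolMul_smul_left {K : Type*} [Field K] {n : ℕ} (t : Fin n → Fin n → K)
    (c : K) (a v : Fin n → K) : evolMul t (c • a) v = c • evolMul t a v := by
  funext k
  simp [evolMul, Finset.mul_sum, mul_assoc]

lemma evolMul_smul_right {K : Type*} [Field K] {n : ℕ} (t : Fin n → Fin n → K)
    (c : K) (v a : Fin n → K) : evolMul t v (c • a) = c • evolMul t v a := by
  funext k
  simp [evolMul, Finset.mul_sum]
  ring_nf
  apply Finset.sum_congr rfl
  intro i _
  ring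

/-- The annihilator of the evolution algebra with structure constants `t`. -/
def evolAnn {K : Type*} [Field K] {n : ℕ} (t : Fin n → Fin n → K) :
    Submodule K (Fin n → K) where
  carrier := {u | ∀ v, evolMul t u v = 0 ∧ evolMul t v u = 0}
  zero_mem' := by
    intro v
    constructor <;> · funext k; simp [evolMul]
  add_mem' := by
    intro a b ha hb v
    exact ⟨by rw [evolMul_add_left, (ha v).1, (hb v).1, add_zero],
           by rw [evolMul_add_right, (ha v).2, (hb v).2, add_zero]⟩
  smul_mem' := by
    intro c a ha v
    exact ⟨by rw [evolMul_smul_left, (ha v).1, smul_zero],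
           by rw [evolMul_smul_right, (ha v).2, smul_zero]⟩

/-- The derived algebra (span of all products). -/
def evolDerived {K : Type*} [Field K] {n : ℕ} (t : Fin n → Fin n → K) :
    Submodule K (Fin n → K) :=
  Submodule.span K {w | ∃ u v, evolMul t u v = w}

/-- Two evolution algebras (given by structure constants) are isomorphic. -/
def EvolIsom {K : Type*} [Field K] {n : ℕ} (t t' : Fin n → Fin n → K) : Prop :=
  ∃ f : (Fin n → K) ≃ₗ[K] (Fin n → K),
    ∀ u v, evolMul t' (f u) (f v) = f (evolMul t u v)

/-- Two evolution algebras (given by structure constants) are isotopic. -/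
def EvolIsotopic {K : Type*} [Field K] {n : ℕ} (t t' : Fin n → Fin n → K) : Prop :=
  ∃ f g h : (Fin n → K) ≃ₗ[K] (Fin n → K),
    ∀ u v, evolMul t' (f u) (g v) = h (evolMul t u v)

/-- Two evolution algebras (given by structure constants) are strongly isotopic. -/
def EvolStrongIsotopic {K : Type*} [Field K] {n : ℕ} (t t' : Fin n → Fin n → K) : Prop :=
  ∃ f h : (Fin n → K) ≃ₗ[K] (Fin n → K),
    ∀ u v, evolMul t' (f u) (f v) = h (evolMul t u v)



lemma exists_linearEquiv_of_li' {K V : Type*} [Field K] [AddCommGroup V] [Module K V]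
    [FiniteDimensional K V] {m : ℕ} (v w : Fin m → V)
    (hv : LinearIndependent K v) (hw : LinearIndependent K w) :
    ∃ f : V ≃ₗ[K] V, ∀ i, f (v i) = w i := by
  obtain ⟨U', hU'⟩ := (Submodule.span K (Set.range v)).exists_isCompl
  obtain ⟨W', hW'⟩ := (Submodule.span K (Set.range w)).exists_isCompl
  have hfr : Module.finrank K U' = Module.finrank K W' := by
    have h1 := Submodule.finrank_add_eq_of_isCompl hU'
    have h2 := Submodule.finrank_add_eq_of_isCompl hW'
    have h3 : Module.finrank K (Submodule.span K (Set.range v)) = m := by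
      rw [finrank_span_eq_card hv, Fintype.card_fin]
    have h4 : Module.finrank K (Submodule.span K (Set.range w)) = m := by
      rw [finrank_span_eq_card hw, Fintype.card_fin]
    omega
  let e1 := (Module.Basis.span hv).equiv (Module.Basis.span hw) (Equiv.refl _)
  let e2 := LinearEquiv.ofFinrankEq _ _ hfr
  refine ⟨((Submodule.prodEquivOfIsCompl _ _ hU').symm.trans
      ((e1.prodCongr e2).trans (Submodule.prodEquivOfIsCompl _ _ hW'))), fun i => ?_⟩
  have hvmem : v i ∈ Submodule.span K (Set.range v) := Submodule.subset_span ⟨i, rfl⟩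
  have hstep : (Submodule.prodEquivOfIsCompl _ _ hU').symm (v i)
      = ((⟨v i, hvmem⟩ : ↥(Submodule.span K (Set.range v))), (0 : U')) :=
    Submodule.prodEquivOfIsCompl_symm_apply_left _ _ hU'
      (⟨v i, hvmem⟩ : ↥(Submodule.span K (Set.range v)))
  have hbase : (⟨v i, hvmem⟩ : ↥(Submodule.span K (Set.range v))) = Module.Basis.span hv i :=
    (Module.Basis.span_apply hv i).symm
  have he1 : e1 (Module.Basis.span hv i) = Module.Basis.span hw i := by
    simp only [e1, Module.Basis.equiv_apply, Equiv.refl_apply]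
  simp only [LinearEquiv.trans_apply, hstep, hbase, LinearEquiv.prodCongr_apply, he1, map_zero,
    Submodule.coe_prodEquivOfIsCompl']
  simpa using Module.Basis.span_apply hw i

lemma mem_evolAnn_iff' {K : Type*} [Field K] {n : ℕ} (t : Fin n → Fin n → K) (u : Fin n → K) :
    u ∈ evolAnn t ↔ ∀ i, t i ≠ 0 → u i = 0 := by
  classical
  have hmem : u ∈ evolAnn t ↔ ∀ v : Fin n → K, evolMul t u v = 0 ∧ evolMul t v u = 0 := Iff.rfl
  rw [hmem]
  constructor
  · intro h i hti
    obtain ⟨k, hk⟩ := Function.ne_iff.mp hti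
    have h2 := congrFun (h (Pi.single i 1)).1 k
    simp only [evolMul, Pi.zero_apply] at h2
    rw [Finset.sum_eq_single i (fun j _ hj => by simp [Pi.single_eq_of_ne hj]) (by simp)] at h2
    simp only [Pi.single_eq_same, mul_one] at h2
    exact (mul_eq_zero.mp h2).resolve_right hk
  · intro h v
    constructor <;>
    · funext k
      simp only [evolMul, Pi.zero_apply]
      apply Finset.sum_eq_zero
      intro i _
      by_cases hti : t i = 0
      · simp [hti]
      · simp [h i hti]

lemma two_nonzero_rows' {K : Type*} [Field K] {n : ℕ} (hn : 2 ≤ n) (t : Fin n → Fin n → K)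
    (hann : Module.finrank K (evolAnn t) = n - 2) :
    ∃ a b : Fin n, a ≠ b ∧ t a ≠ 0 ∧ t b ≠ 0 ∧ ∀ i, i ≠ a → i ≠ b → t i = 0 := by
  classical
  have hker : evolAnn t
      = LinearMap.ker (LinearMap.funLeft K K (Subtype.val : {i : Fin n // t i ≠ 0} → Fin n)) := by
    ext u
    rw [mem_evolAnn_iff', LinearMap.mem_ker]
    constructor
    · intro h
      funext j
      simpa using h j.1 j.2
    · intro h i hti
      simpa using congrFun h ⟨i, hti⟩
  have hrn := LinearMap.finrank_range_add_finrank_ker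
    (LinearMap.funLeft K K (Subtype.val : {i : Fin n // t i ≠ 0} → Fin n))
  rw [LinearMap.range_eq_top.mpr
        (LinearMap.funLeft_surjective_of_injective _ _ _ Subtype.val_injective),
      finrank_top, ← hker, hann, Module.finrank_fintype_fun_eq_card,
      Module.finrank_fintype_fun_eq_card, Fintype.card_fin] at hrn
  have hcard : Fintype.card {i : Fin n // t i ≠ 0} = 2 := by omega
  rw [Fintype.card_subtype] at hcard
  obtain ⟨a, b, hab, hA⟩ := Finset.card_eq_two.mp hcard
  refine ⟨a, b, hab, ?_, ?_, ?_⟩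
  · have : a ∈ Finset.filter (fun i => t i ≠ 0) Finset.univ := by rw [hA]; simp
    simpa using this
  · have : b ∈ Finset.filter (fun i => t i ≠ 0) Finset.univ := by rw [hA]; simp
    simpa using this
  · intro i hia hib
    by_contra hti
    have : i ∈ Finset.filter (fun i => t i ≠ 0) Finset.univ := by simp [hti]
    rw [hA] at this
    simp only [Finset.mem_insert, Finset.mem_singleton] at this
    tauto

lemma evolMul_two' {K : Type*} [Field K] {n : ℕ} (t : Fin n → Fin n → K) (a b : Fin n)
    (hab : a ≠ b) (hz : ∀ i, i ≠ a → i ≠ b → t i = 0) (u v : Fin n → K) :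
    evolMul t u v = (u a * v a) • t a + (u b * v b) • t b := by
  classical
  funext k
  simp only [evolMul, Pi.add_apply, Pi.smul_apply, smul_eq_mul]
  rw [← Finset.sum_subset (Finset.subset_univ ({a, b} : Finset (Fin n)))
      (fun i _ hi => by
        simp only [Finset.mem_insert, Finset.mem_singleton, not_or] at hi
        rw [hz i hi.1 hi.2]; simp)]
  rw [Finset.sum_pair hab]
/-
STATEMENT 9: Every n-dimensional evolution algebra over K whose annihilator has
dimension n − 2 is isotopic to E₂ (e₁e₁ = e₂e₂ = e₁, all other natural-basis products
zero) or to E₅₀₀ (e₁e₁ = e₁, e₂e₂ = e₂, all other natural-basis products zero).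
(0-based indices: e₁, e₂ are the basis vectors with indices 0, 1.)
-/
theorem isotopic_E2_or_E500_of_annihilator_codim_two
    {K : Type*} [Field K] {n : ℕ} (hn : 2 ≤ n) (t : Fin n → Fin n → K)
    (hann : Module.finrank K (evolAnn t) = n - 2) :
    EvolIsotopic t
      (fun i j : Fin n => if ((i : ℕ) = 0 ∨ (i : ℕ) = 1) ∧ (j : ℕ) = 0 then (1 : K) else 0) ∨
    EvolIsotopic t
      (fun i j : Fin n => if i = j ∧ (i : ℕ) < 2 then (1 : K) else 0) := by
  classical
  obtain ⟨a, b, hab, hta, htb, hz⟩ := two_nonzero_rows' hn t hann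
  set i0 : Fin n := ⟨0, by omega⟩ with hi0
  set i1 : Fin n := ⟨1, by omega⟩ with hi1
  have hv0 : (i0 : ℕ) = 0 := by rw [hi0]
  have hv1 : (i1 : ℕ) = 1 := by rw [hi1]
  have h01 : i0 ≠ i1 := by
    intro h
    rw [Fin.ext_iff, hv0, hv1] at h
    exact absurd h (by norm_num)
  -- a permutation sending i0 ↦ a, i1 ↦ b
  set π1 : Equiv.Perm (Fin n) := Equiv.swap i0 a with hπ1
  set π : Equiv.Perm (Fin n) := (Equiv.swap i1 (π1.symm b)).trans π1 with hπdef
  have hπ0 : π i0 = a := by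
    have hne2 : i0 ≠ π1.symm b := by
      intro h
      apply hab
      have := congrArg π1 h
      simpa [hπ1, Equiv.swap_apply_left] using this
    show π1 (Equiv.swap i1 (π1.symm b) i0) = a
    rw [Equiv.swap_apply_of_ne_of_ne h01 hne2, hπ1, Equiv.swap_apply_left]
  have hπ1' : π i1 = b := by
    show π1 (Equiv.swap i1 (π1.symm b) i1) = b
    rw [Equiv.swap_apply_left, Equiv.apply_symm_apply]
  set F : (Fin n → K) ≃ₗ[K] (Fin n → K) := LinearEquiv.funCongrLeft K K π with hF
  have hFa : ∀ u : Fin n → K, F u i0 = u a := fun u => congrArg u hπ0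
  have hFb : ∀ u : Fin n → K, F u i1 = u b := fun u => congrArg u hπ1'
  by_cases hdep : ∃ c : K, t b = c • t a
  · left
    obtain ⟨c, hc⟩ := hdep
    have hcne : c ≠ 0 := by
      rintro rfl
      rw [zero_smul] at hc
      exact htb hc
    set T : Fin n → Fin n → K :=
      fun i j => if ((i : ℕ) = 0 ∨ (i : ℕ) = 1) ∧ (j : ℕ) = 0 then (1 : K) else 0 with hT
    have hTz : ∀ i, i ≠ i0 → i ≠ i1 → T i = 0 := by
      intro i h0 h1
      funext j
      have e0 : (i : ℕ) ≠ 0 := fun h => h0 (Fin.ext (by rw [h, hv0]))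
      have e1 : (i : ℕ) ≠ 1 := fun h => h1 (Fin.ext (by rw [h, hv1]))
      simp [hT, e0, e1]
    have hT10 : T i1 = T i0 := by
      funext j
      simp [hT, hv0, hv1]
    have hρ : T i0 ≠ 0 := by
      intro h
      have := congrFun h i0
      rw [hT] at this
      simp [hv0] at this
    obtain ⟨h, hh⟩ := exists_linearEquiv_of_li' (K := K) (V := Fin n → K) (fun _ : Fin 1 => t a) (fun _ : Fin 1 => T i0)
      (linearIndependent_unique_iff.mpr hta) (linearIndependent_unique_iff.mpr hρ)
    have hhta : h (t a) = T i0 := hh 0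
    -- the diagonal scaling by c at coordinate i1
    set D : (Fin n → K) ≃ₗ[K] (Fin n → K) :=
      { toFun := fun x k => if k = i1 then c * x k else x k
        invFun := fun x k => if k = i1 then c⁻¹ * x k else x k
        map_add' := by
          intro x y
          funext k
          by_cases hk : k = i1
          · simp [hk, mul_add]
          · simp [hk]
        map_smul' := by
          intro r x
          funext k
          by_cases hk : k = i1
          · simp [hk]; ring
          · simp [hk]
        left_inv := by
          intro x
          funext k
          by_cases hk : k = i1
          · simp only [hk, if_pos]
            rw [← mul_assoc, inv_mul_cancel₀ hcne, one_mul]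
          · simp [hk]
        right_inv := by
          intro x
          funext k
          by_cases hk : k = i1
          · simp only [hk, if_pos]
            rw [← mul_assoc, mul_inv_cancel₀ hcne, one_mul]
          · simp [hk] } with hD
    have hD0 : ∀ x : Fin n → K, D x i0 = x i0 := by
      intro x
      show (if i0 = i1 then c * x i0 else x i0) = x i0
      rw [if_neg h01]
    have hD1 : ∀ x : Fin n → K, D x i1 = c * x i1 := by
      intro x
      show (if i1 = i1 then c * x i1 else x i1) = c * x i1
      rw [if_pos rfl]
    refine ⟨F, F.trans D, h, fun u v => ?_⟩
    rw [evolMul_two' T i0 i1 h01 hTz, evolMul_two' t a b hab hz, map_add, map_smul, map_smul,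
        hhta, hc, map_smul, hhta, hT10]
    simp only [LinearEquiv.trans_apply]
    rw [hD0, hD1, hFa, hFa, hFb, hFb, smul_smul]
    have : u b * (c * v b) = u b * v b * c := by ring
    rw [this]
  · right
    have hli : LinearIndependent K ![t a, t b] := by
      rw [LinearIndependent.pair_iff]
      intro s1 s2 hst
      by_cases h2 : s2 = 0
      · subst h2
        refine ⟨?_, rfl⟩
        by_contra h1
        apply hta
        have hsa : s1 • t a = 0 := by simpa using hst
        exact (smul_eq_zero.mp hsa).resolve_left h1
      · exfalso
        apply hdep
        refine ⟨-s1 / s2, ?_⟩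
        funext k
        have hk := congrFun hst k
        simp only [Pi.add_apply, Pi.smul_apply, smul_eq_mul, Pi.zero_apply] at hk
        rw [Pi.smul_apply, smul_eq_mul]
        field_simp
        linear_combination hk
    set T : Fin n → Fin n → K :=
      fun i j => if i = j ∧ (i : ℕ) < 2 then (1 : K) else 0 with hT
    have hTz : ∀ i, i ≠ i0 → i ≠ i1 → T i = 0 := by
      intro i h0 h1
      funext j
      have hlt : ¬ (i : ℕ) < 2 := by
        intro hl
        have : (i : ℕ) = 0 ∨ (i : ℕ) = 1 := by omega
        rcases this with h' | h'
        · exact h0 (Fin.ext (by rw [h', hv0]))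
        · exact h1 (Fin.ext (by rw [h', hv1]))
      simp [hT, hlt]
      intro _; omega
    have hρ01 : LinearIndependent K ![T i0, T i1] := by
      rw [LinearIndependent.pair_iff]
      intro s1 s2 hst
      have hk0 := congrFun hst i0
      have hk1 := congrFun hst i1
      rw [hT] at hk0 hk1
      simp only [Pi.add_apply, Pi.smul_apply, smul_eq_mul, Pi.zero_apply,
        Matrix.cons_val_zero, Matrix.cons_val_one, Matrix.head_cons] at hk0 hk1
      simp [hv0, hv1, h01, h01.symm] at hk0 hk1
      exact ⟨hk0, hk1⟩
    obtain ⟨h, hh⟩ := exists_linearEquiv_of_li' ![t a, t b] ![T i0, T i1] hli hρ01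
    have h1 := hh 0
    have h2 := hh 1
    simp only [Matrix.cons_val_zero, Matrix.cons_val_one, Matrix.head_cons] at h1 h2
    refine ⟨F, F, h, fun u v => ?_⟩
    rw [evolMul_two' T i0 i1 h01 hTz, evolMul_two' t a b hab hz, map_add, map_smul, map_smul,
        h1, h2, hFa, hFa, hFb, hFb]
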